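/- For positive definite k×k matrices Δ_U, Δ_s and sequences n → ∞ with m = c·n^p, p ≥ 1, c > 0, one has (1/2)[log det(A + (n+1)Δ_U + mΔ_s) − log det((n+1)Δ_U + mΔ_s)] ≍ k/n^p for any fixed positive definite matrix A. -/

import Mathlib

open Matrix

section Aux

variable {k : ℕ}

private lemma psd_smul {M : Matrix (Fin k) (Fin k) ℝ} (hM : M.PosSemidef) {r : ℝ}
    (hr : 0 ≤ r) : (r • M).PosSemidef := by
  refine PosSemidef.of_dotProduct_mulVec_nonneg ?_ fun x => ?_
  · unfold Matrix.IsHermitian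
    rw [conjTranspose_smul, hM.1.eq]
    simp
  · rw [smul_mulVec, dotProduct_smul, smul_eq_mul]
    exact mul_nonneg hr (hM.dotProduct_mulVec_nonneg x)

private lemma posdef_smul {M : Matrix (Fin k) (Fin k) ℝ} (hM : M.PosDef) {r : ℝ}
    (hr : 0 < r) : (r • M).PosDef := by
  refine PosDef.of_dotProduct_mulVec_pos ?_ fun x hx => ?_
  · unfold Matrix.IsHermitian
    rw [conjTranspose_smul, hM.1.eq]
    simp
  · rw [smul_mulVec, dotProduct_smul, smul_eq_mul]
    exact mul_pos hr (hM.dotProduct_mulVec_pos hx)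

private lemma conj_diag_psd {P : Matrix (Fin k) (Fin k) ℝ} (hH : P.IsHermitian)
    (f : Fin k → ℝ) (hf : ∀ i, 0 ≤ f i) :
    ((hH.eigenvectorUnitary : Matrix (Fin k) (Fin k) ℝ) * diagonal f *
      star (hH.eigenvectorUnitary : Matrix (Fin k) (Fin k) ℝ)).PosSemidef := by
  rw [Matrix.star_eq_conjTranspose]
  exact (posSemidef_diagonal_iff.mpr hf).mul_mul_conjTranspose_same _

private lemma smul_one_sub_psd {P : Matrix (Fin k) (Fin k) ℝ} (hH : P.IsHermitian)
    {μ : ℝ} (h : ∀ i, hH.eigenvalues i ≤ μ) :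
    ((μ • (1 : Matrix (Fin k) (Fin k) ℝ)) - P).PosSemidef := by
  have hU : (hH.eigenvectorUnitary : Matrix (Fin k) (Fin k) ℝ) *
      star (hH.eigenvectorUnitary : Matrix (Fin k) (Fin k) ℝ) = 1 :=
    (Matrix.mem_unitaryGroup_iff).mp hH.eigenvectorUnitary.2
  have key : (μ • (1 : Matrix (Fin k) (Fin k) ℝ)) - P
      = (hH.eigenvectorUnitary : Matrix (Fin k) (Fin k) ℝ) *
        diagonal (fun i => μ - hH.eigenvalues i) *
        star (hH.eigenvectorUnitary : Matrix (Fin k) (Fin k) ℝ) := by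
    have hd : diagonal (fun i => μ - hH.eigenvalues i)
        = μ • (1 : Matrix (Fin k) (Fin k) ℝ) - diagonal (RCLike.ofReal ∘ hH.eigenvalues) := by
      rw [RCLike.ofReal_real_eq_id]
      ext i j
      by_cases hij : i = j <;>
        simp [Matrix.diagonal_apply, Matrix.one_apply, Matrix.sub_apply, hij]
    rw [hd, Matrix.mul_sub, Matrix.sub_mul,
      ← Unitary.conjStarAlgAut_apply (S := ℝ) hH.eigenvectorUnitary (diagonal (RCLike.ofReal ∘ hH.eigenvalues)),
      ← hH.spectral_theorem]
    have : (hH.eigenvectorUnitary : Matrix (Fin k) (Fin k) ℝ) *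
        (μ • (1 : Matrix (Fin k) (Fin k) ℝ)) *
        star (hH.eigenvectorUnitary : Matrix (Fin k) (Fin k) ℝ)
        = μ • (1 : Matrix (Fin k) (Fin k) ℝ) := by
      rw [Matrix.mul_smul, Matrix.mul_one, Matrix.smul_mul, hU]
    rw [this]
  rw [key]
  exact conj_diag_psd hH _ fun i => sub_nonneg.2 (h i)

private lemma sub_smul_one_psd {P : Matrix (Fin k) (Fin k) ℝ} (hH : P.IsHermitian)
    {μ : ℝ} (h : ∀ i, μ ≤ hH.eigenvalues i) :
    (P - (μ • (1 : Matrix (Fin k) (Fin k) ℝ))).PosSemidef := by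
  have hU : (hH.eigenvectorUnitary : Matrix (Fin k) (Fin k) ℝ) *
      star (hH.eigenvectorUnitary : Matrix (Fin k) (Fin k) ℝ) = 1 :=
    (Matrix.mem_unitaryGroup_iff).mp hH.eigenvectorUnitary.2
  have key : P - (μ • (1 : Matrix (Fin k) (Fin k) ℝ))
      = (hH.eigenvectorUnitary : Matrix (Fin k) (Fin k) ℝ) *
        diagonal (fun i => hH.eigenvalues i - μ) *
        star (hH.eigenvectorUnitary : Matrix (Fin k) (Fin k) ℝ) := by
    have hd : diagonal (fun i => hH.eigenvalues i - μ)
        = diagonal (RCLike.ofReal ∘ hH.eigenvalues) - μ • (1 : Matrix (Fin k) (Fin k) ℝ) := by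
      rw [RCLike.ofReal_real_eq_id]
      ext i j
      by_cases hij : i = j <;>
        simp [Matrix.diagonal_apply, Matrix.one_apply, Matrix.sub_apply, hij]
    rw [hd, Matrix.mul_sub, Matrix.sub_mul,
      ← Unitary.conjStarAlgAut_apply (S := ℝ) hH.eigenvectorUnitary (diagonal (RCLike.ofReal ∘ hH.eigenvalues)),
      ← hH.spectral_theorem]
    have : (hH.eigenvectorUnitary : Matrix (Fin k) (Fin k) ℝ) *
        (μ • (1 : Matrix (Fin k) (Fin k) ℝ)) *
        star (hH.eigenvectorUnitary : Matrix (Fin k) (Fin k) ℝ)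
        = μ • (1 : Matrix (Fin k) (Fin k) ℝ) := by
      rw [Matrix.mul_smul, Matrix.mul_one, Matrix.smul_mul, hU]
    rw [this]
  rw [key]
  exact conj_diag_psd hH _ fun i => sub_nonneg.2 (h i)

/-- Scalar sandwich of a positive definite matrix. -/
private lemma sandwich [NeZero k] {P : Matrix (Fin k) (Fin k) ℝ} (hP : P.PosDef) :
    ∃ ε β : ℝ, 0 < ε ∧ ε ≤ β ∧
      (P - ε • (1 : Matrix (Fin k) (Fin k) ℝ)).PosSemidef ∧
      ((β • (1 : Matrix (Fin k) (Fin k) ℝ)) - P).PosSemidef := by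
  classical
  have hne : (Finset.univ : Finset (Fin k)).Nonempty :=
    Finset.univ_nonempty (α := Fin k)
  refine ⟨Finset.univ.inf' hne hP.1.eigenvalues, Finset.univ.sup' hne hP.1.eigenvalues,
    ?_, ?_, ?_, ?_⟩
  · rw [Finset.lt_inf'_iff]
    exact fun i _ => hP.eigenvalues_pos i
  · obtain ⟨i, _⟩ := hne
    exact le_trans (Finset.inf'_le _ (Finset.mem_univ i))
      (Finset.le_sup' _ (Finset.mem_univ i))
  · exact sub_smul_one_psd hP.1 fun i => Finset.inf'_le _ (Finset.mem_univ i)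
  · exact smul_one_sub_psd hP.1 fun i => Finset.le_sup' _ (Finset.mem_univ i)

private lemma one_le_det_one_add {M : Matrix (Fin k) (Fin k) ℝ} (hM : M.PosSemidef) :
    1 ≤ ((1 : Matrix (Fin k) (Fin k) ℝ) + M).det := by
  classical
  have hH := hM.1
  have hU : (hH.eigenvectorUnitary : Matrix (Fin k) (Fin k) ℝ) *
      star (hH.eigenvectorUnitary : Matrix (Fin k) (Fin k) ℝ) = 1 :=
    (Matrix.mem_unitaryGroup_iff).mp hH.eigenvectorUnitary.2
  have key : (1 : Matrix (Fin k) (Fin k) ℝ) + M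
      = (hH.eigenvectorUnitary : Matrix (Fin k) (Fin k) ℝ) *
        diagonal (fun i => 1 + hH.eigenvalues i) *
        star (hH.eigenvectorUnitary : Matrix (Fin k) (Fin k) ℝ) := by
    have hd : diagonal (fun i => 1 + hH.eigenvalues i)
        = (1 : Matrix (Fin k) (Fin k) ℝ) + diagonal (RCLike.ofReal ∘ hH.eigenvalues) := by
      rw [RCLike.ofReal_real_eq_id]
      ext i j
      by_cases hij : i = j <;>
        simp [Matrix.diagonal_apply, Matrix.one_apply, Matrix.add_apply, hij]
    rw [hd, Matrix.mul_add, Matrix.add_mul,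
      ← Unitary.conjStarAlgAut_apply (S := ℝ) hH.eigenvectorUnitary (diagonal (RCLike.ofReal ∘ hH.eigenvalues)),
      ← hH.spectral_theorem, Matrix.mul_one, hU]
  rw [key, det_mul, det_mul]
  have hdetU : ((hH.eigenvectorUnitary : Matrix (Fin k) (Fin k) ℝ)).det *
      (star (hH.eigenvectorUnitary : Matrix (Fin k) (Fin k) ℝ)).det = 1 := by
    rw [← det_mul, hU, det_one]
  have hD : 1 ≤ (diagonal (fun i => 1 + hH.eigenvalues i)).det := by
    rw [det_diagonal]
    have hle : (∏ _i : Fin k, (1 : ℝ)) ≤ ∏ i, (1 + hH.eigenvalues i) :=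
      Finset.prod_le_prod (fun i _ => zero_le_one)
        (fun i _ => by linarith [hM.eigenvalues_nonneg i])
    simpa using hle
  calc (1 : ℝ) = ((hH.eigenvectorUnitary : Matrix (Fin k) (Fin k) ℝ)).det *
        (star (hH.eigenvectorUnitary : Matrix (Fin k) (Fin k) ℝ)).det * 1 := by
        rw [hdetU, mul_one]
    _ ≤ ((hH.eigenvectorUnitary : Matrix (Fin k) (Fin k) ℝ)).det *
        (star (hH.eigenvectorUnitary : Matrix (Fin k) (Fin k) ℝ)).det *
        (diagonal (fun i => 1 + hH.eigenvalues i)).det := by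
        rw [hdetU]; simpa using hD
    _ = ((hH.eigenvectorUnitary : Matrix (Fin k) (Fin k) ℝ)).det *
        (diagonal (fun i => 1 + hH.eigenvalues i)).det *
        (star (hH.eigenvectorUnitary : Matrix (Fin k) (Fin k) ℝ)).det := by ring

open scoped MatrixOrder in
/-- Monotonicity of determinant along the Loewner order. -/
private lemma det_le_det_add {P S : Matrix (Fin k) (Fin k) ℝ}
    (hP : P.PosDef) (hS : S.PosSemidef) : P.det ≤ (P + S).det := by
  classical
  set Q := CFC.sqrt P with hQdef
  have hQ : Q.PosSemidef := (CFC.sqrt_nonneg P).posSemidef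
  have hQQ : Q * Q = P := CFC.sqrt_mul_sqrt_self P hP.posSemidef.nonneg
  have hdet : Q.det * Q.det = P.det := by rw [← det_mul, hQQ]
  have hQdet : IsUnit Q.det := by
    rw [isUnit_iff_ne_zero]
    intro h
    rw [h, mul_zero] at hdet
    exact hP.det_pos.ne' hdet.symm
  have h1 : Q * Q⁻¹ = 1 := mul_nonsing_inv _ hQdet
  have h2 : Q⁻¹ * Q = 1 := nonsing_inv_mul _ hQdet
  have hQih : Q⁻¹ᴴ = Q⁻¹ := by rw [conjTranspose_nonsing_inv, hQ.1.eq]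
  have hMpsd : (Q⁻¹ * S * Q⁻¹).PosSemidef := by
    have := hS.mul_mul_conjTranspose_same Q⁻¹
    rwa [hQih] at this
  have key : P + S = Q * ((1 : Matrix (Fin k) (Fin k) ℝ) + Q⁻¹ * S * Q⁻¹) * Q := by
    rw [Matrix.mul_add, Matrix.add_mul, Matrix.mul_one, hQQ]
    congr 1
    symm
    calc Q * (Q⁻¹ * S * Q⁻¹) * Q = (Q * Q⁻¹) * S * (Q⁻¹ * Q) := by
          simp only [Matrix.mul_assoc]
      _ = S := by rw [h1, h2, Matrix.one_mul, Matrix.mul_one]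
  rw [key, det_mul, det_mul]
  have hone := one_le_det_one_add hMpsd
  calc P.det = Q.det * Q.det * 1 := by rw [hdet, mul_one]
    _ ≤ Q.det * Q.det * ((1 : Matrix (Fin k) (Fin k) ℝ) + Q⁻¹ * S * Q⁻¹).det := by
        nlinarith [hP.det_pos, hdet]
    _ = Q.det * ((1 : Matrix (Fin k) (Fin k) ℝ) + Q⁻¹ * S * Q⁻¹).det * Q.det := by ring

private lemma half_le_log_one_add {s : ℝ} (h0 : 0 ≤ s) (h1 : s ≤ 1) :
    s / 2 ≤ Real.log (1 + s) := by
  have hpos : (0 : ℝ) < 1 + s := by linarith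
  have h := Real.log_le_sub_one_of_pos (x := (1 + s)⁻¹) (by positivity)
  rw [Real.log_inv] at h
  have hinv : (1 + s) * (1 + s)⁻¹ = 1 := mul_inv_cancel₀ hpos.ne'
  have hy : 0 < (1 + s)⁻¹ := by positivity
  nlinarith [h, hinv, hy, mul_nonneg h0 hy.le]

end Aux

set_option maxHeartbeats 1600000 in
theorem logdet_difference_rate (k : ℕ) [NeZero k]
    (A ΔU Δs : Matrix (Fin k) (Fin k) ℝ)
    (hA : A.PosDef) (hΔU : ΔU.PosDef) (hΔs : Δs.PosDef)
    (c p : ℝ) (hc : 0 < c) (hp : 1 ≤ p) :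
    ∃ c₁ c₂ : ℝ, ∃ N : ℕ, 0 < c₁ ∧ c₁ ≤ c₂ ∧
      ∀ n : ℕ, n ≥ N →
        c₁ * ((k : ℝ) / (n : ℝ) ^ p) ≤
          (1 / 2) * (Real.log (A + ((n : ℝ) + 1) • ΔU + (c * (n : ℝ) ^ p) • Δs).det -
            Real.log (((n : ℝ) + 1) • ΔU + (c * (n : ℝ) ^ p) • Δs).det) ∧
        (1 / 2) * (Real.log (A + ((n : ℝ) + 1) • ΔU + (c * (n : ℝ) ^ p) • Δs).det -
            Real.log (((n : ℝ) + 1) • ΔU + (c * (n : ℝ) ^ p) • Δs).det) ≤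
          c₂ * ((k : ℝ) / (n : ℝ) ^ p) := by
  classical
  obtain ⟨αU, βU, hαU, hαβU, hUlo, hUhi⟩ := sandwich hΔU
  obtain ⟨αs, βs, hαs, hαβs, hslo, hshi⟩ := sandwich hΔs
  obtain ⟨αA, βA, hαA, hαβA, hAlo, hAhi⟩ := sandwich hA
  have hβU : 0 < βU := hαU.trans_le hαβU
  have hβs : 0 < βs := hαs.trans_le hαβs
  have hβA : 0 < βA := hαA.trans_le hαβA
  set X : ℝ := 2 * βU + c * βs with hXdef
  set Y : ℝ := αs * c with hYdef
  have hX : 0 < X := by positivity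
  have hY : 0 < Y := by positivity
  have hYX : Y ≤ X := by
    have : αs * c ≤ βs * c := by nlinarith
    nlinarith
  refine ⟨αA / (4 * X), βA / (2 * Y), max 1 ⌈αA / βU⌉₊, by positivity, ?_, ?_⟩
  · exact div_le_div₀ hβA.le hαβA (by positivity) (by nlinarith)
  intro n hn
  have hn1 : 1 ≤ n := le_trans (le_max_left _ _) hn
  have hx1 : (1 : ℝ) ≤ (n : ℝ) := by exact_mod_cast hn1
  have hx0 : (0 : ℝ) < (n : ℝ) := by linarith
  set x : ℝ := (n : ℝ) with hxdef
  have hxp : x ≤ x ^ p := by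
    calc x = x ^ (1 : ℝ) := (Real.rpow_one x).symm
      _ ≤ x ^ p := Real.rpow_le_rpow_of_exponent_le hx1 hp
  have hxp0 : (0 : ℝ) < x ^ p := lt_of_lt_of_le hx0 hxp
  -- the matrix B
  set B : Matrix (Fin k) (Fin k) ℝ := (x + 1) • ΔU + (c * x ^ p) • Δs with hBdef
  have hrw : A + (x + 1) • ΔU + (c * x ^ p) • Δs = A + B := by
    rw [hBdef, add_assoc]
  rw [hrw]
  have hBpos : B.PosDef := by
    rw [hBdef]
    exact (posdef_smul hΔU (by linarith)).add (posdef_smul hΔs (by positivity))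
  have hABpos : (A + B).PosDef := hA.add_posSemidef hBpos.posSemidef
  -- upper Loewner bound : A ≤ t • B
  set g : ℝ := c * x ^ p * αs with hgdef
  have hg : 0 < g := by positivity
  have hBg : (B - g • (1 : Matrix (Fin k) (Fin k) ℝ)).PosSemidef := by
    have e : B - g • (1 : Matrix (Fin k) (Fin k) ℝ)
        = (x + 1) • ΔU + (c * x ^ p) • (Δs - αs • (1 : Matrix (Fin k) (Fin k) ℝ)) := by
      rw [hBdef, hgdef]; module
    rw [e]
    exact (psd_smul hΔU.posSemidef (by linarith)).add (psd_smul hslo (by positivity))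
  set t : ℝ := βA / g with htdef
  have ht : 0 < t := by positivity
  have htg : t * g = βA := div_mul_cancel₀ βA hg.ne'
  have hT : (t • B - A).PosSemidef := by
    have e : t • B - A
        = t • (B - g • (1 : Matrix (Fin k) (Fin k) ℝ))
          + (βA • (1 : Matrix (Fin k) (Fin k) ℝ) - A) := by
      rw [smul_sub, smul_smul, htg]; abel
    rw [e]
    exact (psd_smul hBg ht.le).add hAhi
  -- lower Loewner bound : s • B ≤ A
  set h : ℝ := (x + 1) * βU + c * x ^ p * βs with hhdef
  have hh : 0 < h := by positivity
  have hBh : (h • (1 : Matrix (Fin k) (Fin k) ℝ) - B).PosSemidef := by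
    have e : h • (1 : Matrix (Fin k) (Fin k) ℝ) - B
        = (x + 1) • (βU • (1 : Matrix (Fin k) (Fin k) ℝ) - ΔU)
          + (c * x ^ p) • (βs • (1 : Matrix (Fin k) (Fin k) ℝ) - Δs) := by
      rw [hhdef, hBdef]; module
    rw [e]
    exact (psd_smul hUhi (by linarith)).add (psd_smul hshi (by positivity))
  set s : ℝ := αA / h with hsdef
  have hs : 0 < s := by positivity
  have hsh : s * h = αA := div_mul_cancel₀ αA hh.ne'
  have hS : (A - s • B).PosSemidef := by
    have e : A - s • B
        = (A - αA • (1 : Matrix (Fin k) (Fin k) ℝ))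
          + s • (h • (1 : Matrix (Fin k) (Fin k) ℝ) - B) := by
      rw [smul_sub, smul_smul, hsh]; abel
    rw [e]
    exact hAlo.add (psd_smul hBh hs.le)
  -- bounds on h and s
  have hhX : h ≤ X * x ^ p := by
    rw [hhdef, hXdef]
    nlinarith [hxp, hx1, hβU.le, hβs.le, hc.le, hxp0.le]
  have hαAh : αA ≤ h := by
    have hceil : (⌈αA / βU⌉₊ : ℝ) ≤ x := by
      exact_mod_cast Nat.cast_le.2 (le_trans (le_max_right _ _) hn)
    have : αA / βU ≤ x := le_trans (Nat.le_ceil _) hceil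
    have hxβ : αA ≤ x * βU := by
      rw [div_le_iff₀ hβU] at this; linarith
    rw [hhdef]
    nlinarith [hβU.le, hβs.le, hc.le, hxp0.le]
  have hs1 : s ≤ 1 := by
    rw [hsdef, div_le_one hh]; exact hαAh
  -- determinant inequalities
  have d1 : (A + B).det ≤ ((1 + t) • B).det := by
    have e : (1 + t) • B = (A + B) + (t • B - A) := by module
    rw [e]
    exact det_le_det_add hABpos hT
  have d2 : ((1 + s) • B).det ≤ (A + B).det := by
    have e : A + B = (1 + s) • B + (A - s • B) := by module
    rw [e]
    exact det_le_det_add (posdef_smul hBpos (by linarith)) hS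
  have hdetB : 0 < B.det := hBpos.det_pos
  have hdetAB : 0 < (A + B).det := hABpos.det_pos
  have hdt : ((1 + t) • B).det = (1 + t) ^ k * B.det := by
    rw [det_smul, Fintype.card_fin]
  have hds : ((1 + s) • B).det = (1 + s) ^ k * B.det := by
    rw [det_smul, Fintype.card_fin]
  -- log bounds
  have hlogup : Real.log (A + B).det - Real.log B.det ≤ (k : ℝ) * Real.log (1 + t) := by
    have h1 : Real.log (A + B).det ≤ Real.log ((1 + t) ^ k * B.det) := by
      rw [← hdt]; exact Real.log_le_log hdetAB d1
    have h2 : Real.log ((1 + t) ^ k * B.det)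
        = (k : ℝ) * Real.log (1 + t) + Real.log B.det := by
      rw [Real.log_mul (by positivity) hdetB.ne', Real.log_pow]
    linarith
  have hlogdown : (k : ℝ) * Real.log (1 + s) ≤ Real.log (A + B).det - Real.log B.det := by
    have h1 : Real.log ((1 + s) ^ k * B.det) ≤ Real.log (A + B).det := by
      rw [← hds]; exact Real.log_le_log (by rw [hds]; positivity) d2
    have h2 : Real.log ((1 + s) ^ k * B.det)
        = (k : ℝ) * Real.log (1 + s) + Real.log B.det := by
      rw [Real.log_mul (by positivity) hdetB.ne', Real.log_pow]
    linarith
  have hk0 : (0 : ℝ) ≤ (k : ℝ) := Nat.cast_nonneg k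
  constructor
  · -- lower bound
    have hlog : s / 2 ≤ Real.log (1 + s) := half_le_log_one_add hs.le hs1
    have step1 : (k : ℝ) * (s / 2) ≤ (k : ℝ) * Real.log (1 + s) :=
      mul_le_mul_of_nonneg_left hlog hk0
    have step2 : αA / (4 * X) * ((k : ℝ) / x ^ p) ≤ (k : ℝ) * (s / 4) := by
      rw [hsdef, div_mul_div_comm]
      have e2 : (k : ℝ) * (αA / h / 4) = αA * (k : ℝ) / (4 * h) := by
        field_simp
      rw [e2]
      exact div_le_div_of_nonneg_left (mul_nonneg hαA.le hk0) (by positivity)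
        (by nlinarith [hhX])
    linarith
  · -- upper bound
    have hlog : Real.log (1 + t) ≤ t :=
      by have := Real.log_le_sub_one_of_pos (x := 1 + t) (by linarith); linarith
    have step1 : (k : ℝ) * Real.log (1 + t) ≤ (k : ℝ) * t :=
      mul_le_mul_of_nonneg_left hlog hk0
    have step2 : (k : ℝ) * t ≤ 2 * (βA / (2 * Y) * ((k : ℝ) / x ^ p)) := by
      rw [htdef, hgdef, hYdef]
      rw [div_mul_div_comm]
      have e1 : (k : ℝ) * (βA / (c * x ^ p * αs)) = (k : ℝ) * βA / (c * x ^ p * αs) := by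
        ring
      have e2 : 2 * (βA * (k : ℝ) / (2 * (αs * c) * x ^ p))
          = (k : ℝ) * βA / (αs * c * x ^ p) := by
        field_simp
      rw [e1, e2]
      apply div_le_div_of_nonneg_left (by positivity) (by positivity) (by nlinarith)
    linarith
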